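/- arXiv:0810.3218 — 6 statements merged into one kernel-verified Lean document; each statement's English description precedes it below -/
import Mathlib

section
/- Let n, m ≥ 1 be integers and let J : ℝ^m → End(ℝ^{2n}) be a linear map such that each J_z is skew-symmetric and J_z ∘ J_z = −|z|²·I. Define the bilinear skew-symmetric map [·,·] : ℝ^{2n} × ℝ^{2n} → ℝ^m by ⟨z, [x,y]⟩ = ⟨J_z x, y⟩ for all z ∈ ℝ^m. Fix η₀ ∈ ℝ^m with η₀ ≠ 0 and ξ₀ ∈ ℝ^{2n}, and define the curves x(t) = |η₀|^{−2} J_{η₀}((I − exp(t J_{η₀}))ξ₀), z(t) = (|ξ₀|²/(2|η₀|³))·(|η₀|t − sin(|η₀|t))·η₀, ξ(t) = (1/2) J_{η₀} x(t) + ξ₀, and η(t) = η₀. Then x(0) = 0, z(0) = 0, and for every t ∈ ℝ these curves satisfy Hamilton's equations of motion for the subriemannian Hamiltonian: x'(t) = ξ(t) + (1/2) J_{η(t)} x(t); z'(t) = (1/4)|x(t)|² η(t) + (1/2)[x(t), ξ(t)]; ξ'(t) = −(1/4)|η(t)|² x(t) + (1/2) J_{η(t)} ξ(t); η'(t) = 0.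 -/
open scoped RealInnerProductSpace

set_option synthInstance.maxHeartbeats 1000000 in
set_option maxHeartbeats 1000000 in
lemma exp_closed_form {E : Type*} [NormedAddCommGroup E] [NormedSpace ℝ E] [CompleteSpace E]
    (A : E →L[ℝ] E) (r : ℝ) (hr : r ≠ 0)
    (hA2 : A * A = (-(r^2) : ℝ) • 1) (t : ℝ) :
    NormedSpace.exp (t • A)
      = Real.cos (r*t) • (1 : E →L[ℝ] E) + (Real.sin (r*t)/r) • A := by
  set P : ℝ → (E →L[ℝ] E) :=
    fun s => Real.cos (r*s) • (1 : E →L[ℝ] E) - (Real.sin (r*s)/r) • A with hP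
  have hid : ∀ s : ℝ, HasDerivAt (fun u : ℝ => r*u) r s := by
    intro s
    simpa using (hasDerivAt_id s).const_mul r
  have hg : ∀ s : ℝ, HasDerivAt (fun u => NormedSpace.exp (u • A) * P u) 0 s := by
    intro s
    have h1 := hasDerivAt_exp_smul_const (𝕂 := ℝ) A s
    have hPd : HasDerivAt P
        ((-Real.sin (r*s)*r) • (1 : E →L[ℝ] E) - ((Real.cos (r*s)*r)/r) • A) s :=
      (((hid s).cos).smul_const _).sub ((((hid s).sin).div_const r).smul_const A)
    have h2 := h1.mul hPd
    refine HasDerivAt.congr_deriv h2 ?_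
    rw [mul_assoc, ← mul_add]
    have key : A * P s + ((-Real.sin (r*s)*r) • (1 : E →L[ℝ] E)
        - ((Real.cos (r*s)*r)/r) • A) = 0 := by
      rw [hP]
      simp only [mul_sub, mul_smul_comm, mul_one, hA2]
      rw [smul_smul]
      match_scalars <;> (field_simp; try ring)
    rw [key, mul_zero]
  have hconst : ∀ s : ℝ, NormedSpace.exp (s • A) * P s = 1 := by
    intro s
    have h0 : (fun u => NormedSpace.exp (u • A) * P u) s
        = (fun u => NormedSpace.exp (u • A) * P u) 0 :=
      is_const_of_deriv_eq_zero (fun u => (hg u).differentiableAt)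
        (fun u => (hg u).deriv) s 0
    simp only [zero_smul, NormedSpace.exp_zero, one_mul, hP, mul_zero, Real.cos_zero,
      Real.sin_zero, zero_div, zero_smul, sub_zero, one_smul] at h0
    exact h0
  have hPQ : P t * (Real.cos (r*t) • (1 : E →L[ℝ] E) + (Real.sin (r*t)/r) • A) = 1 := by
    rw [hP]
    simp only [sub_mul, mul_add, smul_mul_assoc, mul_smul_comm, one_mul, mul_one, hA2,
      smul_smul]
    match_scalars <;> (field_simp; nlinarith [Real.sin_sq_add_cos_sq (r*t)])
  calc NormedSpace.exp (t • A)
      = NormedSpace.exp (t • A) * (P t * (Real.cos (r*t) • 1 + (Real.sin (r*t)/r) • A)) := by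
        rw [hPQ, mul_one]
    _ = (NormedSpace.exp (t • A) * P t) * (Real.cos (r*t) • 1 + (Real.sin (r*t)/r) • A) := by
        rw [mul_assoc]
    _ = _ := by rw [hconst, one_mul]
set_option maxHeartbeats 2000000 in
/-- The explicit curves solve Hamilton's equations of motion on an H-type group.
`J : ℝ^m →ₗ End(ℝ^{2n})` is linear with each `J z` skew-symmetric and `J z ∘ J z = −|z|²I`;
the bracket `br : ℝ^{2n} × ℝ^{2n} → ℝ^m` is defined by ⟨z, [x,y]⟩ = ⟨J z x, y⟩.
Given η₀ ≠ 0 and ξ₀, the curves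
x(t) = |η₀|^{−2} J_{η₀}((I − exp(t J_{η₀}))ξ₀),
z(t) = (|ξ₀|²/(2|η₀|³))(|η₀|t − sin(|η₀|t))η₀,
ξ(t) = (1/2) J_{η₀} x(t) + ξ₀, η(t) = η₀
satisfy x(0) = 0, z(0) = 0 and Hamilton's equations
x' = ξ + (1/2)J_η x, z' = (1/4)|x|²η + (1/2)[x,ξ],
ξ' = −(1/4)|η|²x + (1/2)J_η ξ, η' = 0. -/
theorem hamilton_solution (n m : ℕ) (hn : 1 ≤ n) (hm : 1 ≤ m)
    (J : EuclideanSpace ℝ (Fin m) →ₗ[ℝ]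
      (EuclideanSpace ℝ (Fin (2 * n)) →L[ℝ] EuclideanSpace ℝ (Fin (2 * n))))
    (hJ_skew : ∀ (z : EuclideanSpace ℝ (Fin m)) (x y : EuclideanSpace ℝ (Fin (2 * n))),
      ⟪J z x, y⟫ = -⟪x, J z y⟫)
    (hJ_sq : ∀ (z : EuclideanSpace ℝ (Fin m)) (x : EuclideanSpace ℝ (Fin (2 * n))),
      J z (J z x) = -(‖z‖ ^ 2) • x)
    (br : EuclideanSpace ℝ (Fin (2 * n)) → EuclideanSpace ℝ (Fin (2 * n)) →
      EuclideanSpace ℝ (Fin m))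
    (hbr : ∀ (z : EuclideanSpace ℝ (Fin m)) (x y : EuclideanSpace ℝ (Fin (2 * n))),
      ⟪z, br x y⟫ = ⟪J z x, y⟫)
    (η₀ : EuclideanSpace ℝ (Fin m)) (hη₀ : η₀ ≠ 0)
    (ξ₀ : EuclideanSpace ℝ (Fin (2 * n)))
    (x : ℝ → EuclideanSpace ℝ (Fin (2 * n))) (z : ℝ → EuclideanSpace ℝ (Fin m))
    (ξ : ℝ → EuclideanSpace ℝ (Fin (2 * n))) (η : ℝ → EuclideanSpace ℝ (Fin m))
    (hx : ∀ t, x t = (‖η₀‖ ^ 2)⁻¹ •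
      (J η₀) (((1 : EuclideanSpace ℝ (Fin (2 * n)) →L[ℝ] EuclideanSpace ℝ (Fin (2 * n))) -
        NormedSpace.exp (t • J η₀)) ξ₀))
    (hz : ∀ t, z t = (‖ξ₀‖ ^ 2 / (2 * ‖η₀‖ ^ 3) * (‖η₀‖ * t - Real.sin (‖η₀‖ * t))) • η₀)
    (hξ : ∀ t, ξ t = (1 / 2 : ℝ) • (J η₀) (x t) + ξ₀)
    (hη : ∀ t, η t = η₀) :
    x 0 = 0 ∧ z 0 = 0 ∧
    ∀ t : ℝ,
      HasDerivAt x (ξ t + (1 / 2 : ℝ) • (J (η t)) (x t)) t ∧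
      HasDerivAt z ((1 / 4 * ‖x t‖ ^ 2) • η t + (1 / 2 : ℝ) • br (x t) (ξ t)) t ∧
      HasDerivAt ξ ((-(1 / 4) * ‖η t‖ ^ 2) • x t + (1 / 2 : ℝ) • (J (η t)) (ξ t)) t ∧
      HasDerivAt η 0 t := by
  have hr0 : (0:ℝ) < ‖η₀‖ := norm_pos_iff.mpr hη₀
  have hr : ‖η₀‖ ≠ 0 := ne_of_gt hr0
  have hAA : ∀ v, J η₀ (J η₀ v) = -(‖η₀‖ ^ 2) • v := fun v => hJ_sq η₀ v
  have hA2 : J η₀ * J η₀ = (-(‖η₀‖ ^ 2) : ℝ) •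
      (1 : EuclideanSpace ℝ (Fin (2 * n)) →L[ℝ] EuclideanSpace ℝ (Fin (2 * n))) := by
    ext v
    simp [ContinuousLinearMap.mul_apply, hAA v]
  have hexp := exp_closed_form (J η₀) ‖η₀‖ hr hA2
  -- closed form for x
  have hxc : ∀ t, x t = (Real.sin (‖η₀‖*t)/‖η₀‖) • ξ₀
      + ((1 - Real.cos (‖η₀‖*t))/‖η₀‖^2) • J η₀ ξ₀ := by
    intro t
    rw [hx t, hexp t]
    simp only [ContinuousLinearMap.sub_apply, ContinuousLinearMap.add_apply,
      ContinuousLinearMap.smul_apply, ContinuousLinearMap.one_apply, map_sub, map_add, map_smul,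
      hAA]
    match_scalars <;> (field_simp; try ring)
  -- closed form for ξ
  have hξc : ∀ t, ξ t = ((1 + Real.cos (‖η₀‖*t))/2) • ξ₀
      + (Real.sin (‖η₀‖*t)/(2*‖η₀‖)) • J η₀ ξ₀ := by
    intro t
    rw [hξ t, hxc t]
    simp only [map_add, map_smul, hAA]
    match_scalars <;> (field_simp; try ring)
  -- inner product identities
  have hJvv : ∀ (w : EuclideanSpace ℝ (Fin m)) v, ⟪J w v, v⟫ = 0 := by
    intro w v
    have h1 := hJ_skew w v v
    have h2 : ⟪v, J w v⟫ = ⟪J w v, v⟫ := real_inner_comm _ _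
    linarith
  have hvJv : ∀ (w : EuclideanSpace ℝ (Fin m)) v, ⟪v, J w v⟫ = 0 := by
    intro w v
    rw [real_inner_comm]; exact hJvv w v
  have hnormJ : ∀ (w : EuclideanSpace ℝ (Fin m)) v, ⟪J w v, J w v⟫ = ‖w‖^2 * ⟪v, v⟫ := by
    intro w v
    have h1 := hJ_skew w (J w v) v
    rw [hJ_sq w v, real_inner_smul_left] at h1
    have h2 : ⟪J w v, J w v⟫ = ⟪v, J w v⟫ * 0 + ⟪J w v, J w v⟫ := by ring
    nlinarith [real_inner_comm (J w v) v, real_inner_comm v v]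
  have hJab : ∀ w : EuclideanSpace ℝ (Fin m), ⟪J w ξ₀, J η₀ ξ₀⟫ = ⟪w, η₀⟫ * ⟪ξ₀, ξ₀⟫ := by
    intro w
    have h1 := hnormJ (w + η₀) ξ₀
    rw [map_add] at h1
    simp only [ContinuousLinearMap.add_apply] at h1
    rw [real_inner_add_add_self, norm_add_sq_real] at h1
    have h2 := hnormJ w ξ₀
    have h3 := hnormJ η₀ ξ₀
    linarith
  have hJba : ∀ w : EuclideanSpace ℝ (Fin m), ⟪J w (J η₀ ξ₀), ξ₀⟫ = -(⟪w, η₀⟫ * ⟪ξ₀, ξ₀⟫) := by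
    intro w
    have h1 := hJ_skew w (J η₀ ξ₀) ξ₀
    have h2 : ⟪J η₀ ξ₀, J w ξ₀⟫ = ⟪J w ξ₀, J η₀ ξ₀⟫ := real_inner_comm _ _
    rw [h1, h2, hJab w]
  -- the bracket vanishes along the solution
  have hbr0 : ∀ t, br (x t) (ξ t) = 0 := by
    intro t
    apply ext_inner_left ℝ
    intro w
    rw [inner_zero_right, hbr, hxc t, hξc t]
    simp only [map_add, map_smul, inner_add_left, inner_add_right, real_inner_smul_left,
      real_inner_smul_right, hJvv, hJab w, hJba w]
    have hsc := Real.sin_sq_add_cos_sq (‖η₀‖*t)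
    linear_combination (⟪w, η₀⟫ * ⟪ξ₀, ξ₀⟫ / (2*‖η₀‖^2)) * hsc
  -- norm of x t
  have hnx : ∀ t, ‖x t‖^2 = 2*(1 - Real.cos (‖η₀‖*t))/‖η₀‖^2 * ‖ξ₀‖^2 := by
    intro t
    rw [← real_inner_self_eq_norm_sq, hxc t]
    simp only [inner_add_left, inner_add_right, real_inner_smul_left, real_inner_smul_right,
      hJvv η₀ ξ₀, hvJv η₀ ξ₀, hnormJ η₀ ξ₀]
    rw [real_inner_self_eq_norm_sq]
    have hsc := Real.sin_sq_add_cos_sq (‖η₀‖*t)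
    field_simp
    linear_combination (‖ξ₀‖^2 * ‖η₀‖) * hsc
  refine ⟨?_, ?_, ?_⟩
  · rw [hxc 0]
    simp
  · rw [hz 0]
    simp
  intro t
  have hid : HasDerivAt (fun u : ℝ => ‖η₀‖*u) ‖η₀‖ t := by
    simpa using (hasDerivAt_id t).const_mul ‖η₀‖
  refine ⟨?_, ?_, ?_, ?_⟩
  · -- x equation
    have hD : HasDerivAt x ((Real.cos (‖η₀‖*t)*‖η₀‖/‖η₀‖) • ξ₀
        + ((0 - -Real.sin (‖η₀‖*t)*‖η₀‖)/‖η₀‖^2) • J η₀ ξ₀) t := by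
      rw [funext hxc]
      exact ((hid.sin.div_const _).smul_const _).add
        ((((hasDerivAt_const t (1:ℝ)).sub hid.cos).div_const _).smul_const _)
    convert hD using 1
    rw [hη t, hξc t, hxc t]
    simp only [map_add, map_smul, hAA]
    match_scalars <;> (field_simp; try ring)
  · -- z equation
    have hD : HasDerivAt z ((‖ξ₀‖^2/(2*‖η₀‖^3) * (‖η₀‖ - Real.cos (‖η₀‖*t)*‖η₀‖)) • η₀) t := by
      rw [funext hz]
      exact ((hid.sub hid.sin).const_mul _).smul_const _
    convert hD using 1
    rw [hη t, hbr0 t, hnx t]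
    simp only [smul_zero, add_zero]
    match_scalars
    field_simp
    ring
  · -- ξ equation
    have hD : HasDerivAt ξ (((0 + -Real.sin (‖η₀‖*t)*‖η₀‖)/2) • ξ₀
        + (Real.cos (‖η₀‖*t)*‖η₀‖/(2*‖η₀‖)) • J η₀ ξ₀) t := by
      rw [funext hξc]
      exact ((((hasDerivAt_const t (1:ℝ)).add hid.cos).div_const _).smul_const _).add
        ((hid.sin.div_const _).smul_const _)
    convert hD using 1
    rw [hη t, hξc t, hxc t]
    simp only [map_add, map_smul, hAA]
    match_scalars <;> (field_simp; try ring)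
  · rw [funext hη]
    exact hasDerivAt_const t η₀
end

section
/- There exists a constant c > 0 such that ν(θ) ≥ c·θ for all θ ∈ [0,π). -/
open scoped Real

/-- The function ν(θ) = (2θ − sin 2θ)/(1 − cos 2θ) for θ ∈ (0,π), with ν(0) = 0. -/
noncomputable def nu (θ : ℝ) : ℝ :=
  if θ = 0 then 0 else (2 * θ - Real.sin (2 * θ)) / (1 - Real.cos (2 * θ))

/-- There is a constant `c > 0` such that `ν(θ) ≥ c·θ` for all `θ ∈ [0,π)`. -/
theorem nu_ge_linear :
    ∃ c : ℝ, 0 < c ∧ ∀ θ ∈ Set.Ico (0 : ℝ) π, c * θ ≤ nu θ := by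
  refine ⟨1/2, by norm_num, ?_⟩
  rintro θ ⟨h0, hπ⟩
  rcases eq_or_lt_of_le h0 with h | hθ
  · simp [nu, ← h]
  · unfold nu
    rw [if_neg (ne_of_gt hθ)]
    have hs : 0 < Real.sin θ := Real.sin_pos_of_pos_of_lt_pi hθ hπ
    have hden : 1 - Real.cos (2 * θ) = 2 * Real.sin θ ^ 2 := by
      rw [Real.cos_two_mul]
      nlinarith [Real.sin_sq_add_cos_sq θ]
    have hnum : Real.sin (2 * θ) = 2 * Real.sin θ * Real.cos θ := Real.sin_two_mul θ
    rw [hden, hnum, le_div_iff₀ (by positivity)]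
    rcases le_or_gt (Real.cos θ) 0 with hc | hc
    · nlinarith [mul_nonneg hs.le (neg_nonneg.2 hc), Real.sin_le_one θ,
        mul_nonneg hθ.le (mul_nonneg (sub_nonneg.2 (Real.sin_le_one θ)) hs.le)]
    · nlinarith [mul_nonneg (sub_nonneg.2 (Real.sin_le hθ.le)) hc.le,
        mul_nonneg hθ.le (sq_nonneg (Real.cos θ - 1)), Real.sin_sq_add_cos_sq θ]
end

section
/- Define F(θ) = θ²/(θ − sin θ cos θ) for θ > π/2 (the denominator is positive there). Then for every θ₁ with π/2 < θ₁ < π and every θ₂ > π, one has F(θ₁) < F(π) = π < F(θ₂). Consequently, if y > π/2 and θ₁ ∈ (π/2,π), θ₂ > π both satisfy ν(θ) = y, then (θ₁/sin θ₁)² < (θ₂/sin θ₂)². -/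
open scoped Real

/-- F(θ) = θ²/(θ − sin θ cos θ). -/
noncomputable def Ffun (θ : ℝ) : ℝ := θ ^ 2 / (θ - Real.sin θ * Real.cos θ)

lemma sc_le (θ : ℝ) : Real.sin θ * Real.cos θ ≤ 1 / 2 := by
  have h := Real.sin_le_one (2 * θ)
  rw [Real.sin_two_mul] at h
  linarith

lemma denom_pos {θ : ℝ} (hθ : π / 2 < θ) : 0 < θ - Real.sin θ * Real.cos θ := by
  have h := sc_le θ
  have hπ := Real.pi_gt_three
  linarith

lemma F_lt {θ : ℝ} (h1 : π / 2 < θ) (h2 : θ < π) : Ffun θ < π := by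
  have hπ' : (0:ℝ) < π := Real.pi_pos
  have hs : 0 < Real.sin θ := Real.sin_pos_of_pos_of_lt_pi (by linarith) h2
  have hc : Real.cos θ < 0 := Real.cos_neg_of_pi_div_two_lt_of_lt h1 (by linarith)
  have hθ0 : 0 < θ := by linarith
  have hd : θ < θ - Real.sin θ * Real.cos θ := by nlinarith
  have : Ffun θ < θ ^ 2 / θ :=
    div_lt_div_of_pos_left (by positivity) hθ0 hd
  calc Ffun θ < θ ^ 2 / θ := this
    _ = θ := by field_simp [sq]
    _ < π := h2

lemma g_strict : StrictMonoOn (fun x : ℝ => 2 * x ^ 2 - 2 * π * x + π * Real.sin (2 * x))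
    (Set.Ici π) := by
  apply strictMonoOn_of_deriv_pos (convex_Ici π)
  · fun_prop
  · intro x hx
    rw [interior_Ici] at hx
    have hder : HasDerivAt (fun x : ℝ => 2 * x ^ 2 - 2 * π * x + π * Real.sin (2 * x))
        (4 * x - 2 * π + π * (Real.cos (2 * x) * 2)) x := by
      have h1 : HasDerivAt (fun x : ℝ => Real.sin (2 * x)) (Real.cos (2 * x) * 2) x := by
        simpa [Function.comp_def] using (Real.hasDerivAt_sin (2 * x)).comp x ((hasDerivAt_id x).const_mul 2)
      have h2 : HasDerivAt (fun x : ℝ => 2 * x ^ 2 - 2 * π * x) (4 * x - 2 * π) x := by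
        have := ((hasDerivAt_pow 2 x).const_mul 2).sub ((hasDerivAt_id x).const_mul (2 * π))
        exact this.congr_deriv (by push_cast; ring)
      exact h2.add (h1.const_mul π)
    rw [hder.deriv]
    have hc : -1 ≤ Real.cos (2 * x) := Real.neg_one_le_cos _
    have hπ : (0:ℝ) < π := Real.pi_pos
    nlinarith [hx.out]

lemma F_gt {θ : ℝ} (h : π < θ) : π < Ffun θ := by
  have hπ : (0:ℝ) < π := Real.pi_pos
  have hg : (0:ℝ) < 2 * θ ^ 2 - 2 * π * θ + π * Real.sin (2 * θ) := by
    have h0 := g_strict (Set.self_mem_Ici) (Set.mem_Ici.2 h.le) h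
    simp only [Real.sin_two_mul, Real.sin_pi, mul_zero, zero_mul] at h0
    rw [Real.sin_two_mul]
    nlinarith [h0]
  have hd : 0 < θ - Real.sin θ * Real.cos θ := denom_pos (by linarith)
  rw [Ffun, lt_div_iff₀ hd]
  rw [Real.sin_two_mul] at hg
  nlinarith

lemma nu_eq {θ : ℝ} (hs : Real.sin θ ≠ 0) :
    nu θ = (θ - Real.sin θ * Real.cos θ) / Real.sin θ ^ 2 := by
  have hθ : θ ≠ 0 := by rintro rfl; simp at hs
  have hcos : 1 - Real.cos (2 * θ) = 2 * Real.sin θ ^ 2 := by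
    have := Real.cos_two_mul θ
    have := Real.sin_sq_add_cos_sq θ
    nlinarith
  rw [nu, if_neg hθ, hcos, Real.sin_two_mul]
  rw [div_eq_div_iff (by positivity) (by positivity)]
  ring

/-- For π/2 < θ₁ < π and θ₂ > π one has F(θ₁) < F(π) = π < F(θ₂); consequently if
y > π/2 and θ₁ ∈ (π/2,π), θ₂ > π both satisfy ν(θ) = y, then
(θ₁/sin θ₁)² < (θ₂/sin θ₂)². -/
theorem Ffun_monotone_across_pi :
    (∀ θ₁ θ₂ : ℝ, π / 2 < θ₁ → θ₁ < π → π < θ₂ → Ffun θ₁ < π ∧ π < Ffun θ₂) ∧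
    Ffun π = π ∧
    (∀ y θ₁ θ₂ : ℝ, π / 2 < y → π / 2 < θ₁ → θ₁ < π → π < θ₂ →
      nu θ₁ = y → nu θ₂ = y →
      (θ₁ / Real.sin θ₁) ^ 2 < (θ₂ / Real.sin θ₂) ^ 2) := by
  refine ⟨fun θ₁ θ₂ h1 h2 h3 => ⟨F_lt h1 h2, F_gt h3⟩, ?_, ?_⟩
  · have hπ : (π:ℝ) ≠ 0 := Real.pi_ne_zero
    simp [Ffun, Real.sin_pi, sq]
  · intro y θ₁ θ₂ hy h1 h2 h3 hn1 hn2
    have hπ : (0:ℝ) < π := Real.pi_pos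
    have hy0 : 0 < y := by linarith
    have hs1 : Real.sin θ₁ ≠ 0 :=
      ne_of_gt (Real.sin_pos_of_pos_of_lt_pi (by linarith) h2)
    have hs2 : Real.sin θ₂ ≠ 0 := by
      intro h
      have hθ0 : θ₂ ≠ 0 := by intro h'; rw [h'] at h3; linarith
      have hc : Real.cos (2 * θ₂) = 1 := by
        have := Real.cos_two_mul θ₂
        have h2' := Real.sin_sq_add_cos_sq θ₂
        nlinarith
      rw [nu, if_neg hθ0, hc] at hn2
      simp at hn2
      linarith [hn2 ▸ hy]
    have hd1 : (θ₁ - Real.sin θ₁ * Real.cos θ₁) ≠ 0 := ne_of_gt (denom_pos h1)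
    have hd2 : (θ₂ - Real.sin θ₂ * Real.cos θ₂) ≠ 0 := ne_of_gt (denom_pos (by linarith))
    have key : ∀ θ : ℝ, Real.sin θ ≠ 0 → (θ - Real.sin θ * Real.cos θ) ≠ 0 →
        (θ / Real.sin θ) ^ 2 = Ffun θ * nu θ := by
      intro θ hs hd
      rw [nu_eq hs, Ffun, div_pow]
      field_simp
    rw [key θ₁ hs1 hd1, key θ₂ hs2 hd2, hn1, hn2]
    have := F_lt h1 h2
    have := F_gt h3
    calc Ffun θ₁ * y < π * y := by nlinarith
      _ < Ffun θ₂ * y := by nlinarith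
end

section
/- Let a, b ∈ ℝ^m and let w = |a|² − |b|² + 2i(a·b) ∈ ℂ (so w = (a+bi)·(a+bi) under the complex bilinear dot product). Let s ∈ ℂ satisfy s² = w and Im s ≥ 0. Then |a| − |b| ≤ |Re s| ≤ |a| and 0 ≤ Im s ≤ |b|. Moreover, equality holds in |Re s| = |a| (equivalently in Im s = |b|, when b ≠ 0) if and only if a and b are parallel, i.e. a = r·b for some r ∈ ℝ or b = 0. -/
set_option maxHeartbeats 1000000


open scoped RealInnerProductSpace

/-- Let a, b ∈ ℝ^m, w = |a|² − |b|² + 2i(a·b), and let s ∈ ℂ satisfy s² = w, Im s ≥ 0.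
Then |a| − |b| ≤ |Re s| ≤ |a| and 0 ≤ Im s ≤ |b|; equality |Re s| = |a| (equivalently
Im s = |b| when b ≠ 0) holds iff a and b are parallel (a = r·b for some r ∈ ℝ, or b = 0). -/
theorem sqrt_complex_re_im_bounds (m : ℕ) (a b : EuclideanSpace ℝ (Fin m)) (s : ℂ)
    (hs : s ^ 2 = ((‖a‖ ^ 2 - ‖b‖ ^ 2 : ℝ) : ℂ) + 2 * (⟪a, b⟫ : ℝ) * Complex.I)
    (him : 0 ≤ s.im) :
    (‖a‖ - ‖b‖ ≤ |s.re| ∧ |s.re| ≤ ‖a‖) ∧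
    (0 ≤ s.im ∧ s.im ≤ ‖b‖) ∧
    (|s.re| = ‖a‖ ↔ ((∃ r : ℝ, a = r • b) ∨ b = 0)) ∧
    (b ≠ 0 → (s.im = ‖b‖ ↔ ((∃ r : ℝ, a = r • b) ∨ b = 0))) := by
  set x := s.re with hx
  set y := s.im with hy
  set A := ‖a‖ with hA
  set B := ‖b‖ with hB
  set t : ℝ := ⟪a, b⟫ with ht
  have hA0 : 0 ≤ A := norm_nonneg a
  have hB0 : 0 ≤ B := norm_nonneg b
  rw [Complex.ext_iff] at hs
  obtain ⟨h1, h2⟩ := hs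
  simp only [pow_two, Complex.mul_re, Complex.mul_im, Complex.add_re, Complex.add_im,
    Complex.ofReal_re, Complex.ofReal_im, Complex.I_re, Complex.I_im, Complex.mul_re,
    Complex.mul_im, Complex.re_ofNat, Complex.im_ofNat] at h1 h2
  ring_nf at h1 h2
  have hCS : |t| ≤ A * B := abs_real_inner_le_norm a b
  have hxy : x * y = t := by linarith
  have h1' : x^2 - y^2 = A^2 - B^2 := by ring_nf; linarith
  clear h1 h2
  have hprod : (x * y)^2 ≤ A^2 * B^2 := by
    have h := mul_le_mul hCS hCS (abs_nonneg t) (mul_nonneg hA0 hB0)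
    have h2 : (x*y)^2 = |t| * |t| := by rw [hxy, ← sq_abs]; ring
    nlinarith
  have hx2 : x^2 ≤ A^2 := by nlinarith [sq_nonneg x, sq_nonneg y, sq_nonneg (x*y), sq_nonneg B]
  have hy2 : y^2 ≤ B^2 := by nlinarith
  have hxabs : |x| ≤ A := by nlinarith [sq_abs x, abs_nonneg x]
  have hyB : y ≤ B := by nlinarith [sq_nonneg (y - B)]
  have hlow : A - B ≤ |x| := by
    rcases le_or_gt A B with h | h
    · linarith [abs_nonneg x]
    · nlinarith [sq_abs x, abs_nonneg x, sq_nonneg y]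
  -- equality characterization
  have key : x^2 = A^2 ↔ ((∃ r : ℝ, a = r • b) ∨ b = 0) := by
    constructor
    · intro hxA
      have hyB2 : y^2 = B^2 := by nlinarith
      have hip : t^2 = A^2 * B^2 := by rw [← hxy]; nlinarith
      by_cases hb : b = 0
      · exact Or.inr hb
      by_cases ha : a = 0
      · exact Or.inl ⟨0, by simp [ha]⟩
      left
      have hBpos : 0 < B := norm_pos_iff.mpr hb
      have habs : |t| = A * B := by
        refine le_antisymm hCS ?_
        nlinarith [sq_abs t, abs_nonneg t, mul_nonneg hA0 hB0]
      rcases (abs_eq (mul_nonneg hA0 hB0)).mp habs with hpos | hneg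
      · have heq := inner_eq_norm_mul_iff_real.mp hpos
        refine ⟨A / B, ?_⟩
        have h3 : a = B⁻¹ • (A • b) := by
          rw [← heq, smul_smul, inv_mul_cancel₀ (ne_of_gt hBpos), one_smul]
        rw [h3, smul_smul, div_eq_inv_mul]
      · have hneg' : ⟪a, -b⟫ = ‖a‖ * ‖(-b : EuclideanSpace ℝ (Fin m))‖ := by
          rw [inner_neg_right, norm_neg]; rw [← ht, ← hA, ← hB]; linarith
        have heq := inner_eq_norm_mul_iff_real.mp hneg'
        rw [norm_neg] at heq
        refine ⟨-(A / B), ?_⟩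
        have h3 : a = B⁻¹ • (A • (-b)) := by
          rw [← heq, smul_smul, inv_mul_cancel₀ (ne_of_gt hBpos), one_smul]
        rw [h3, smul_neg, smul_neg, smul_smul, ← neg_smul, div_eq_inv_mul]
    · intro hpar
      have hip : t^2 = A^2 * B^2 := by
        rcases hpar with ⟨r, hr⟩ | hb
        · rw [ht, hr, real_inner_smul_left, real_inner_self_eq_norm_sq, hA, hr, norm_smul]
          simp only [Real.norm_eq_abs, mul_pow, sq_abs, hB]; ring
        · simp [hb, hB, ht]
      have hp : (x*y)^2 = A^2 * B^2 := by rw [hxy]; exact hip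
      have hge : A^2 ≤ x^2 := by
        nlinarith [sq_nonneg x, sq_nonneg y, sq_nonneg B, sq_nonneg (x*y)]
      linarith
  have keyabs : |x| = A ↔ ((∃ r : ℝ, a = r • b) ∨ b = 0) := by
    rw [← key]
    constructor
    · intro h; rw [← sq_abs, h]
    · intro h
      have h0 := abs_nonneg x
      nlinarith [sq_abs x]
  refine ⟨⟨hlow, hxabs⟩, ⟨him, hyB⟩, keyabs, ?_⟩
  intro hb
  rw [← keyabs]
  constructor
  · intro hyB'
    have hy2' : y^2 = B^2 := by rw [hyB']
    have hxA : x^2 = A^2 := by nlinarith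
    rw [← sq_abs x] at hxA
    nlinarith [abs_nonneg x]
  · intro hxA
    have hxA2 : x^2 = A^2 := by rw [← sq_abs x, hxA]
    have hy2' : y^2 = B^2 := by nlinarith
    nlinarith
end

section
/- For every α ∈ ℝ and every β ∈ (0,π), one has Re((α + iβ)·coth(α + iβ)) ≥ β·cot β, with equality if and only if α = 0. (Here coth ζ = cosh ζ / sinh ζ; note sinh(α+iβ) ≠ 0 for β ∈ (0,π).) Explicitly, Re((α+iβ) coth(α+iβ)) − β cot β = sinh²α·(α coth α − β cot β)/(cosh²α − cos²β), where α coth α is interpreted as 1 at α = 0. -/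
open scoped Real

lemma sinh_lt_mul_cosh' {x : ℝ} (hx : 0 < x) : Real.sinh x < x * Real.cosh x := by
  have h : StrictMonoOn (fun x : ℝ => x * Real.cosh x - Real.sinh x) (Set.Ici 0) := by
    apply strictMonoOn_of_deriv_pos (convex_Ici 0)
    · fun_prop
    · intro y hy
      simp only [interior_Ici, Set.mem_Ioi] at hy
      have : deriv (fun x : ℝ => x * Real.cosh x - Real.sinh x) y = y * Real.sinh y := by
        simp [deriv_sub, deriv_mul, Real.deriv_cosh, Real.deriv_sinh]
      rw [this]
      positivity
  have := h (Set.self_mem_Ici) (Set.mem_Ici.2 hx.le) hx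
  simp at this
  linarith

lemma re_eq_aux (α β : ℝ) :
    ((((α : ℂ) + (β : ℂ) * Complex.I) *
        (Complex.cosh ((α : ℂ) + (β : ℂ) * Complex.I) /
          Complex.sinh ((α : ℂ) + (β : ℂ) * Complex.I))).re) =
    (α * Real.sinh α * Real.cosh α + β * Real.sin β * Real.cos β) /
      (Real.sinh α ^ 2 * Real.cos β ^ 2 + Real.cosh α ^ 2 * Real.sin β ^ 2) := by
  have hs : Complex.sinh ((α : ℂ) + (β : ℂ) * Complex.I)
      = Complex.mk (Real.sinh α * Real.cos β) (Real.cosh α * Real.sin β) := by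
    rw [Complex.sinh_add, Complex.sinh_mul_I, Complex.cosh_mul_I, Complex.mk_eq_add_mul_I]
    push_cast [← Complex.ofReal_sinh, ← Complex.ofReal_cosh, ← Complex.ofReal_sin,
      ← Complex.ofReal_cos]
    ring
  have hc : Complex.cosh ((α : ℂ) + (β : ℂ) * Complex.I)
      = Complex.mk (Real.cosh α * Real.cos β) (Real.sinh α * Real.sin β) := by
    rw [Complex.cosh_add, Complex.sinh_mul_I, Complex.cosh_mul_I, Complex.mk_eq_add_mul_I]
    push_cast [← Complex.ofReal_sinh, ← Complex.ofReal_cosh, ← Complex.ofReal_sin,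
      ← Complex.ofReal_cos]
    ring
  have hz : ((α : ℂ) + (β : ℂ) * Complex.I) = Complex.mk α β := by
    rw [Complex.mk_eq_add_mul_I]
  have h1 : Real.cosh α ^ 2 - Real.sinh α ^ 2 = 1 := Real.cosh_sq_sub_sinh_sq α
  have h2 : Real.sin β ^ 2 + Real.cos β ^ 2 = 1 := Real.sin_sq_add_cos_sq β
  rw [hs, hc, hz, mul_div_assoc']
  simp only [Complex.div_re, Complex.normSq_mk, Complex.mul_re, Complex.mul_im]
  rw [← add_div]
  have hnum : (α * (Real.cosh α * Real.cos β) - β * (Real.sinh α * Real.sin β)) *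
          (Real.sinh α * Real.cos β) +
        (α * (Real.sinh α * Real.sin β) + β * (Real.cosh α * Real.cos β)) *
          (Real.cosh α * Real.sin β)
      = α * Real.sinh α * Real.cosh α + β * Real.sin β * Real.cos β := by
    linear_combination (α * Real.sinh α * Real.cosh α) * h2 + (β * Real.sin β * Real.cos β) * h1
  have hden : Real.sinh α * Real.cos β * (Real.sinh α * Real.cos β) +
        Real.cosh α * Real.sin β * (Real.cosh α * Real.sin β)
      = Real.sinh α ^ 2 * Real.cos β ^ 2 + Real.cosh α ^ 2 * Real.sin β ^ 2 := by ring
  rw [hnum, hden]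

lemma beta_cot_lt_one {β : ℝ} (hβ0 : 0 < β) (hβπ : β < π) : β * Real.cos β < Real.sin β := by
  have hsβ : 0 < Real.sin β := Real.sin_pos_of_pos_of_lt_pi hβ0 hβπ
  rcases le_or_gt (Real.cos β) 0 with h | h
  · nlinarith
  · have h2 : β < π / 2 := by
      by_contra hc
      push_neg at hc
      have := Real.cos_nonpos_of_pi_div_two_le_of_le hc (by linarith [Real.pi_pos])
      linarith
    have := Real.lt_tan hβ0 h2
    rw [Real.tan_eq_sin_div_cos] at this
    calc β * Real.cos β < (Real.sin β / Real.cos β) * Real.cos β := by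
          exact mul_lt_mul_of_pos_right this h
      _ = Real.sin β := by field_simp

lemma kpos {α β : ℝ} (hα : α ≠ 0) (hβ0 : 0 < β) (hβπ : β < π) :
    0 < Real.sinh α * (α * Real.cosh α * Real.sin β - β * Real.cos β * Real.sinh α) := by
  have hsβ : 0 < Real.sin β := Real.sin_pos_of_pos_of_lt_pi hβ0 hβπ
  have hb := beta_cot_lt_one hβ0 hβπ
  have key : ∀ a : ℝ, 0 < a →
      0 < Real.sinh a * (a * Real.cosh a * Real.sin β - β * Real.cos β * Real.sinh a) := by
    intro a ha
    have hsa : 0 < Real.sinh a := Real.sinh_pos_iff.2 ha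
    have hlt : Real.sinh a < a * Real.cosh a := sinh_lt_mul_cosh' ha
    apply mul_pos hsa
    rcases le_or_gt (Real.cos β) 0 with h | h
    · have h1 : 0 < a * Real.cosh a * Real.sin β := by positivity
      nlinarith
    · nlinarith [mul_pos (mul_pos hβ0 h) hsa]
  rcases hα.lt_or_gt with h | h
  · have := key (-α) (by linarith)
    simp only [Real.sinh_neg, Real.cosh_neg] at this
    nlinarith
  · exact key α h

/-- For α ∈ ℝ, β ∈ (0,π): Re((α+iβ)coth(α+iβ)) ≥ β cot β, with equality iff α = 0;
explicitly Re((α+iβ)coth(α+iβ)) − β cot β = sinh²α (α coth α − β cot β)/(cosh²α − cos²β),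
where α coth α is interpreted as 1 at α = 0. -/
theorem re_coth_ge_cot (α β : ℝ) (hβ0 : 0 < β) (hβπ : β < π) :
    β * (Real.cos β / Real.sin β) ≤
      (((α : ℂ) + (β : ℂ) * Complex.I) *
        (Complex.cosh ((α : ℂ) + (β : ℂ) * Complex.I) /
          Complex.sinh ((α : ℂ) + (β : ℂ) * Complex.I))).re ∧
    ((((α : ℂ) + (β : ℂ) * Complex.I) *
        (Complex.cosh ((α : ℂ) + (β : ℂ) * Complex.I) /
          Complex.sinh ((α : ℂ) + (β : ℂ) * Complex.I))).re =
        β * (Real.cos β / Real.sin β) ↔ α = 0) ∧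
    (((α : ℂ) + (β : ℂ) * Complex.I) *
        (Complex.cosh ((α : ℂ) + (β : ℂ) * Complex.I) /
          Complex.sinh ((α : ℂ) + (β : ℂ) * Complex.I))).re -
        β * (Real.cos β / Real.sin β) =
      Real.sinh α ^ 2 *
        ((if α = 0 then (1 : ℝ) else α * Real.cosh α / Real.sinh α) -
          β * (Real.cos β / Real.sin β)) /
        (Real.cosh α ^ 2 - Real.cos β ^ 2) := by
  have hsβ : 0 < Real.sin β := Real.sin_pos_of_pos_of_lt_pi hβ0 hβπ
  have h1 : Real.cosh α ^ 2 - Real.sinh α ^ 2 = 1 := Real.cosh_sq_sub_sinh_sq α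
  have h2 : Real.sin β ^ 2 + Real.cos β ^ 2 = 1 := Real.sin_sq_add_cos_sq β
  have hDeq : Real.sinh α ^ 2 * Real.cos β ^ 2 + Real.cosh α ^ 2 * Real.sin β ^ 2
      = Real.cosh α ^ 2 - Real.cos β ^ 2 := by nlinarith
  have hD : 0 < Real.cosh α ^ 2 - Real.cos β ^ 2 := by nlinarith [sq_nonneg (Real.sinh α)]
  have hre := re_eq_aux α β
  rw [hDeq] at hre
  set D := Real.cosh α ^ 2 - Real.cos β ^ 2 with hDdef
  -- central identity
  have hnum : (α * Real.sinh α * Real.cosh α + β * Real.sin β * Real.cos β) * Real.sin β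
        - β * Real.cos β * D
      = Real.sinh α * (α * Real.cosh α * Real.sin β - β * Real.cos β * Real.sinh α) := by
    rw [hDdef]
    linear_combination β * Real.cos β * h2 - β * Real.cos β * h1
  have hcentral :
      (α * Real.sinh α * Real.cosh α + β * Real.sin β * Real.cos β) / D -
          β * (Real.cos β / Real.sin β)
        = Real.sinh α * (α * Real.cosh α * Real.sin β - β * Real.cos β * Real.sinh α)
            / (Real.sin β * D) := by
    rw [← hnum]
    field_simp
  rcases eq_or_ne α 0 with rfl | hα
  · have hz : Real.sinh 0 * (0 * Real.cosh 0 * Real.sin β - β * Real.cos β * Real.sinh 0)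
        / (Real.sin β * D) = 0 := by simp
    rw [hz] at hcentral
    refine ⟨by rw [hre]; linarith, ⟨fun _ => rfl, fun _ => by rw [hre]; linarith⟩, ?_⟩
    rw [hre]
    norm_num at hcentral ⊢
    linarith
  · have hK := kpos hα hβ0 hβπ
    have hKdiv : 0 < Real.sinh α * (α * Real.cosh α * Real.sin β - β * Real.cos β * Real.sinh α)
        / (Real.sin β * D) := div_pos hK (by positivity)
    have hsα : Real.sinh α ≠ 0 := fun h => hα (Real.sinh_injective (by simpa using h))
    refine ⟨by rw [hre]; linarith [hcentral, hKdiv], ?_, ?_⟩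
    · constructor
      · intro h
        rw [hre] at h
        rw [h] at hcentral
        simp at hcentral
        linarith [hcentral, hKdiv]
      · intro h; exact absurd h hα
    · rw [hre, hcentral, if_neg hα]
      rw [div_eq_div_iff (by positivity) hD.ne']
      field_simp
end

section
/- Let m, n, k ≥ 1 be integers, Σ ⊂ ℝ^k, r > 0, B(0,r) the open ball of radius r in ℝ^m, and let g : B(0,r) × Σ → ℝ and K : ℝ^{2n} × B(0,r) × Σ → ℂ be measurable. Define F(x,σ) := ∫_{B(0,r)} e^{−|x|² g(λ,σ)} K(x,λ,σ) dλ. Suppose (1) there is b₁ > 0 with g(λ,σ) ≥ b₁|λ|² for all λ ∈ B(0,r), σ ∈ Σ, and (2) k₂ := sup{|K(x,λ,σ)| : x ∈ ℝ^{2n}, λ ∈ B(0,r), σ ∈ Σ} < ∞. Then there is C₂' > 0 with |F(x,σ)| ≤ C₂'/|x|^m for all x ≠ 0 and σ ∈ Σ. If in addition (3) there is b₂ > 0 with g(λ,σ) ≤ b₂|λ|² for all λ ∈ B(0,r), σ ∈ Σ, and (4) there is a function ε : (0,∞) → [0,r] with ρ·ε(ρ) → ∞ as ρ → ∞ and k₁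 := inf{Re K(x,λ,σ) : x ∈ ℝ^{2n}, λ ∈ B(0,ε(|x|)), σ ∈ Σ} > 0, then there exist C₁' > 0 and x₀ > 0 such that Re F(x,σ) ≥ C₁'/|x|^m for all |x| ≥ x₀ and all σ ∈ Σ. -/
open scoped Real
open MeasureTheory Filter

section SDAux

local notation "E" m => EuclideanSpace ℝ (Fin m)

lemma sd_gauss_integrable (m : ℕ) {b : ℝ} (hb : 0 < b) :
    Integrable (fun v : E m => Real.exp (-(b * ‖v‖ ^ 2))) := by
  have h := (GaussianFourier.integrable_cexp_neg_mul_sq_norm_add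
    (V := E m) (b := (b : ℂ)) (by simpa using hb) 0 0).norm
  simpa [Complex.norm_exp, neg_mul, ← Complex.ofReal_pow] using h

lemma sd_gauss_integral (m : ℕ) {b : ℝ} (hb : 0 < b) :
    ∫ v : E m, Real.exp (-(b * ‖v‖ ^ 2)) = (π / b) ^ ((m : ℝ) / 2) := by
  have h := GaussianFourier.integral_rexp_neg_mul_sq_norm (V := E m) hb
  simpa [finrank_euclideanSpace_fin, neg_mul] using h

lemma sd_rpow_half (m : ℕ) {t : ℝ} (ht : 0 < t) :
    ((t : ℝ) ^ 2) ^ ((m : ℝ) / 2) = t ^ m := by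
  rw [← Real.rpow_natCast t 2, ← Real.rpow_mul ht.le]
  have : (2 : ℝ) * ((m : ℝ) / 2) = (m : ℕ) := by push_cast; ring
  rw [show ((2 : ℕ) : ℝ) = (2 : ℝ) by norm_num, this, Real.rpow_natCast]

lemma sd_gauss_integral_scaled (m : ℕ) {c t : ℝ} (hc : 0 < c) (ht : 0 < t) :
    ∫ v : E m, Real.exp (-(c * t ^ 2 * ‖v‖ ^ 2))
      = (π / c) ^ ((m : ℝ) / 2) / t ^ m := by
  have h := sd_gauss_integral m (mul_pos hc (pow_pos ht 2))
  rw [h, show π / (c * t ^ 2) = (π / c) / t ^ 2 by ring,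
    Real.div_rpow (by positivity) (by positivity), sd_rpow_half m ht]

end SDAux

set_option maxHeartbeats 1000000 in
/-- Abstract steepest-descent lemma.  With F(x,σ) = ∫_{B(0,r)} e^{−|x|²g(λ,σ)}K(x,λ,σ)dλ:
if g ≥ b₁|λ|² and |K| ≤ k₂, then |F(x,σ)| ≤ C₂'/|x|^m for x ≠ 0; if moreover
g ≤ b₂|λ|² and Re K ≥ k₁ > 0 on balls B(0,ε(|x|)) with ρ·ε(ρ) → ∞, then
Re F(x,σ) ≥ C₁'/|x|^m for all |x| ≥ x₀. -/
theorem steepest_descent_abstract (m n k : ℕ) (hm : 1 ≤ m) (hn : 1 ≤ n) (hk : 1 ≤ k)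
    (Sig : Set (EuclideanSpace ℝ (Fin k))) (r : ℝ) (hr : 0 < r)
    (g : EuclideanSpace ℝ (Fin m) → EuclideanSpace ℝ (Fin k) → ℝ)
    (K : EuclideanSpace ℝ (Fin (2 * n)) → EuclideanSpace ℝ (Fin m) →
      EuclideanSpace ℝ (Fin k) → ℂ)
    (hg_meas : Measurable fun p : EuclideanSpace ℝ (Fin m) × EuclideanSpace ℝ (Fin k) =>
      g p.1 p.2)
    (hK_meas : Measurable fun p : EuclideanSpace ℝ (Fin (2 * n)) ×
      EuclideanSpace ℝ (Fin m) × EuclideanSpace ℝ (Fin k) => K p.1 p.2.1 p.2.2)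
    (F : EuclideanSpace ℝ (Fin (2 * n)) → EuclideanSpace ℝ (Fin k) → ℂ)
    (hF : ∀ x σ, F x σ = ∫ lam in Metric.ball (0 : EuclideanSpace ℝ (Fin m)) r,
      Complex.exp (-((‖x‖ ^ 2 * g lam σ : ℝ) : ℂ)) * K x lam σ)
    (b₁ : ℝ) (hb₁ : 0 < b₁)
    (hg_lower : ∀ lam ∈ Metric.ball (0 : EuclideanSpace ℝ (Fin m)) r, ∀ σ ∈ Sig,
      b₁ * ‖lam‖ ^ 2 ≤ g lam σ)
    (k₂ : ℝ)
    (hk₂ : ∀ (x : EuclideanSpace ℝ (Fin (2 * n))),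
      ∀ lam ∈ Metric.ball (0 : EuclideanSpace ℝ (Fin m)) r, ∀ σ ∈ Sig,
      ‖K x lam σ‖ ≤ k₂) :
    (∃ C₂' : ℝ, 0 < C₂' ∧ ∀ (x : EuclideanSpace ℝ (Fin (2 * n))), x ≠ 0 → ∀ σ ∈ Sig,
      ‖F x σ‖ ≤ C₂' / ‖x‖ ^ m) ∧
    (∀ b₂ : ℝ, 0 < b₂ →
      (∀ lam ∈ Metric.ball (0 : EuclideanSpace ℝ (Fin m)) r, ∀ σ ∈ Sig,
        g lam σ ≤ b₂ * ‖lam‖ ^ 2) →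
      ∀ ε : ℝ → ℝ, (∀ ρ : ℝ, 0 < ρ → ε ρ ∈ Set.Icc 0 r) →
        Tendsto (fun ρ : ℝ => ρ * ε ρ) atTop atTop →
      ∀ k₁ : ℝ, 0 < k₁ →
        (∀ (x : EuclideanSpace ℝ (Fin (2 * n))),
          ∀ lam ∈ Metric.ball (0 : EuclideanSpace ℝ (Fin m)) (ε ‖x‖), ∀ σ ∈ Sig,
          k₁ ≤ (K x lam σ).re) →
      ∃ C₁' x₀ : ℝ, 0 < C₁' ∧ 0 < x₀ ∧
        ∀ (x : EuclideanSpace ℝ (Fin (2 * n))), x₀ ≤ ‖x‖ → ∀ σ ∈ Sig,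
          C₁' / ‖x‖ ^ m ≤ (F x σ).re) := by
  classical
  set k₂' : ℝ := max k₂ 0 with hk₂'def
  have hk₂'nonneg : 0 ≤ k₂' := le_max_right _ _
  -- measurability of the integrand
  have hmeas : ∀ (x : EuclideanSpace ℝ (Fin (2 * n))) (σ : EuclideanSpace ℝ (Fin k)),
      Measurable fun lam : EuclideanSpace ℝ (Fin m) =>
        Complex.exp (-((‖x‖ ^ 2 * g lam σ : ℝ) : ℂ)) * K x lam σ := by
    intro x σ
    have hgσ : Measurable fun lam : EuclideanSpace ℝ (Fin m) => g lam σ :=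
      hg_meas.comp (measurable_id.prodMk measurable_const)
    have hKσ : Measurable fun lam : EuclideanSpace ℝ (Fin m) => K x lam σ :=
      hK_meas.comp (measurable_const.prodMk (measurable_id.prodMk measurable_const))
    exact ((Complex.measurable_exp.comp
      ((Complex.measurable_ofReal.comp ((measurable_const.mul hgσ))).neg)).mul hKσ)
  -- norm of the integrand
  have hnorm : ∀ (x : EuclideanSpace ℝ (Fin (2 * n))) σ lam,
      ‖Complex.exp (-((‖x‖ ^ 2 * g lam σ : ℝ) : ℂ)) * K x lam σ‖
        = Real.exp (-(‖x‖ ^ 2 * g lam σ)) * ‖K x lam σ‖ := by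
    intro x σ lam
    rw [norm_mul]
    congr 1
    rw [Complex.norm_exp, Complex.neg_re, Complex.ofReal_re]
  -- pointwise bound on the ball, for σ ∈ Sig
  have hbound : ∀ (x : EuclideanSpace ℝ (Fin (2 * n))) σ, σ ∈ Sig →
      ∀ lam ∈ Metric.ball (0 : EuclideanSpace ℝ (Fin m)) r,
      ‖Complex.exp (-((‖x‖ ^ 2 * g lam σ : ℝ) : ℂ)) * K x lam σ‖
        ≤ k₂' * Real.exp (-(b₁ * ‖x‖ ^ 2 * ‖lam‖ ^ 2)) := by
    intro x σ hσ lam hlam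
    rw [hnorm]
    rw [mul_comm k₂']
    apply mul_le_mul
    · apply Real.exp_le_exp.2
      have h1 := hg_lower lam hlam σ hσ
      nlinarith [mul_le_mul_of_nonneg_left h1 (by positivity : (0:ℝ) ≤ ‖x‖ ^ 2)]
    · exact le_trans (hk₂ x lam hlam σ hσ) (le_max_left _ _)
    · exact norm_nonneg _
    · exact Real.exp_nonneg _
  -- integrability on the ball
  have hint : ∀ (x : EuclideanSpace ℝ (Fin (2 * n))) σ, σ ∈ Sig →
      IntegrableOn (fun lam => Complex.exp (-((‖x‖ ^ 2 * g lam σ : ℝ) : ℂ)) * K x lam σ)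
        (Metric.ball (0 : EuclideanSpace ℝ (Fin m)) r) := by
    intro x σ hσ
    apply Measure.integrableOn_of_bounded (M := k₂') measure_ball_lt_top.ne
      (hmeas x σ).aestronglyMeasurable
    rw [ae_restrict_iff' measurableSet_ball]
    refine Eventually.of_forall fun lam hlam => ?_
    calc ‖_‖ ≤ k₂' * Real.exp (-(b₁ * ‖x‖ ^ 2 * ‖lam‖ ^ 2)) := hbound x σ hσ lam hlam
      _ ≤ k₂' * 1 := by
          apply mul_le_mul_of_nonneg_left _ hk₂'nonneg
          rw [Real.exp_le_one_iff]
          have : (0:ℝ) ≤ b₁ * ‖x‖ ^ 2 * ‖lam‖ ^ 2 := by positivity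
          linarith
      _ = k₂' := mul_one _
  constructor
  · -- Part 1: upper bound
    refine ⟨(k₂' + 1) * (π / b₁) ^ ((m : ℝ) / 2), by positivity, ?_⟩
    intro x hx σ hσ
    have ht : 0 < ‖x‖ := norm_pos_iff.2 hx
    have hb : 0 < b₁ * ‖x‖ ^ 2 := by positivity
    have hGint : Integrable (fun lam : EuclideanSpace ℝ (Fin m) =>
        k₂' * Real.exp (-(b₁ * ‖x‖ ^ 2 * ‖lam‖ ^ 2))) :=
      (sd_gauss_integrable m hb).const_mul _
    rw [hF]
    calc ‖∫ lam in Metric.ball (0 : EuclideanSpace ℝ (Fin m)) r,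
          Complex.exp (-((‖x‖ ^ 2 * g lam σ : ℝ) : ℂ)) * K x lam σ‖
        ≤ ∫ lam in Metric.ball (0 : EuclideanSpace ℝ (Fin m)) r,
            ‖Complex.exp (-((‖x‖ ^ 2 * g lam σ : ℝ) : ℂ)) * K x lam σ‖ :=
          norm_integral_le_integral_norm _
      _ ≤ ∫ lam in Metric.ball (0 : EuclideanSpace ℝ (Fin m)) r,
            k₂' * Real.exp (-(b₁ * ‖x‖ ^ 2 * ‖lam‖ ^ 2)) := by
          apply setIntegral_mono_on (hint x σ hσ).norm hGint.integrableOn measurableSet_ball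
          exact fun lam hlam => hbound x σ hσ lam hlam
      _ ≤ ∫ lam : EuclideanSpace ℝ (Fin m),
            k₂' * Real.exp (-(b₁ * ‖x‖ ^ 2 * ‖lam‖ ^ 2)) := by
          apply setIntegral_le_integral hGint
          exact Eventually.of_forall fun lam => by positivity
      _ = k₂' * ((π / b₁) ^ ((m : ℝ) / 2) / ‖x‖ ^ m) := by
          rw [integral_const_mul, sd_gauss_integral_scaled m hb₁ ht]
      _ ≤ (k₂' + 1) * (π / b₁) ^ ((m : ℝ) / 2) / ‖x‖ ^ m := by
          rw [← mul_div_assoc]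
          gcongr
          linarith
  · -- Part 2: lower bound
    intro b₂ hb₂ hg_upper ε hε hεtend k₁ hk₁ hK₁
    set ω : ℝ := (volume (Metric.ball (0 : EuclideanSpace ℝ (Fin m)) 1)).toReal with hωdef
    have hω : 0 < ω := ENNReal.toReal_pos (Metric.measure_ball_pos volume _ one_pos).ne'
      measure_ball_lt_top.ne
    set C₁' : ℝ := k₁ * Real.exp (-b₂) * ω / 2 with hC₁def
    have hC₁ : 0 < C₁' := by positivity
    set Cg : ℝ := k₂' * (π / (b₁ / 2)) ^ ((m : ℝ) / 2) with hCgdef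
    -- eventual smallness of the tail coefficient
    have htend0 : Tendsto (fun ρ : ℝ => Cg * Real.exp (-(b₁ / 2 * (ρ * ε ρ) ^ 2)))
        atTop (nhds 0) := by
      have h1 : Tendsto (fun s : ℝ => b₁ / 2 * s ^ 2) atTop atTop :=
        (tendsto_pow_atTop two_ne_zero).const_mul_atTop (by positivity)
      have h2 : Tendsto (fun s : ℝ => Real.exp (-(b₁ / 2 * s ^ 2))) atTop (nhds 0) :=
        Real.tendsto_exp_neg_atTop_nhds_zero.comp h1
      have h3 := (h2.comp hεtend).const_mul Cg
      simpa [Function.comp, mul_zero] using h3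
    have hev : ∀ᶠ ρ : ℝ in atTop, 1 ≤ ρ * ε ρ ∧
        Cg * Real.exp (-(b₁ / 2 * (ρ * ε ρ) ^ 2)) ≤ C₁' :=
      (hεtend.eventually_ge_atTop 1).and
        (htend0.eventually (eventually_le_nhds hC₁))
    obtain ⟨x₀', hx₀'⟩ := eventually_atTop.mp hev
    refine ⟨C₁', max x₀' 1, hC₁, lt_of_lt_of_le one_pos (le_max_right _ _), ?_⟩
    intro x hx σ hσ
    have ht1 : 1 ≤ ‖x‖ := le_trans (le_max_right _ _) hx
    have ht : 0 < ‖x‖ := lt_of_lt_of_le one_pos ht1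
    obtain ⟨hge1, hsmall⟩ := hx₀' ‖x‖ (le_trans (le_max_left _ _) hx)
    have hεr := hε ‖x‖ ht
    have hεpos : 0 < ε ‖x‖ := by
      rcases lt_or_ge 0 (ε ‖x‖) with h | h
      · exact h
      · exfalso; nlinarith
    have hεler : ε ‖x‖ ≤ r := hεr.2
    have hinv : ‖x‖⁻¹ ≤ ε ‖x‖ := by
      have h1 : 1 / ‖x‖ ≤ ε ‖x‖ := (div_le_iff₀ ht).2 (by linarith [hge1])
      simpa [one_div] using h1
    set f : EuclideanSpace ℝ (Fin m) → ℂ :=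
      fun lam => Complex.exp (-((‖x‖ ^ 2 * g lam σ : ℝ) : ℂ)) * K x lam σ with hfdef
    set S₁ : Set (EuclideanSpace ℝ (Fin m)) := Metric.ball 0 (ε ‖x‖) with hS₁def
    set S₂ : Set (EuclideanSpace ℝ (Fin m)) :=
      Metric.ball (0 : EuclideanSpace ℝ (Fin m)) r \ S₁ with hS₂def
    have hS₁r : S₁ ⊆ Metric.ball (0 : EuclideanSpace ℝ (Fin m)) r :=
      Metric.ball_subset_ball hεler
    have hfi : IntegrableOn f (Metric.ball (0 : EuclideanSpace ℝ (Fin m)) r) := hint x σ hσ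
    have hfi₁ : IntegrableOn f S₁ := hfi.mono_set hS₁r
    have hmS₁ : MeasurableSet S₁ := measurableSet_ball
    have hfire : IntegrableOn (fun lam => (f lam).re) S₁ := by
      have h := hfi₁.re
      exact (by simpa [RCLike.re_to_complex] using h : Integrable (fun x => (f x).re) (volume.restrict S₁))
    have hfi₂ : IntegrableOn f S₂ := hfi.mono_set Set.diff_subset
    have hsplit : (∫ lam in Metric.ball (0 : EuclideanSpace ℝ (Fin m)) r, f lam)
        = (∫ lam in S₁, f lam) + ∫ lam in S₂, f lam := by
      rw [← Set.union_diff_cancel hS₁r]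
      exact setIntegral_union Set.disjoint_sdiff_right
        (measurableSet_ball.diff measurableSet_ball) hfi₁ hfi₂
    -- description of the real part of f
    have href : ∀ lam, (f lam).re = Real.exp (-(‖x‖ ^ 2 * g lam σ)) * (K x lam σ).re := by
      intro lam
      rw [hfdef]
      simp only [← Complex.ofReal_neg, ← Complex.ofReal_exp, Complex.re_ofReal_mul]
    -- lower bound on the inner integral
    have hmainpt : ∀ lam ∈ Metric.ball (0 : EuclideanSpace ℝ (Fin m)) ‖x‖⁻¹,
        k₁ * Real.exp (-b₂) ≤ (f lam).re := by
      intro lam hlam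
      rw [mem_ball_zero_iff] at hlam
      have hlam₁ : lam ∈ S₁ := by
        rw [hS₁def, mem_ball_zero_iff]; exact lt_of_lt_of_le hlam hinv
      have hlamr : lam ∈ Metric.ball (0 : EuclideanSpace ℝ (Fin m)) r := hS₁r hlam₁
      have hKre : k₁ ≤ (K x lam σ).re := hK₁ x lam hlam₁ σ hσ
      have hgu : g lam σ ≤ b₂ * ‖lam‖ ^ 2 := hg_upper lam hlamr σ hσ
      have hexp : Real.exp (-b₂) ≤ Real.exp (-(‖x‖ ^ 2 * g lam σ)) := by
        apply Real.exp_le_exp.2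
        have hln : ‖lam‖ ≥ 0 := norm_nonneg _
        have hu : ‖x‖ * ‖lam‖ ≤ 1 := by
          have h3 := mul_le_mul_of_nonneg_left hlam.le ht.le
          rwa [mul_inv_cancel₀ ht.ne'] at h3
        have hu0 : (0:ℝ) ≤ ‖x‖ * ‖lam‖ := by positivity
        have h2 : ‖x‖ ^ 2 * ‖lam‖ ^ 2 ≤ 1 := by nlinarith
        nlinarith [mul_le_mul_of_nonneg_left hgu (by positivity : (0:ℝ) ≤ ‖x‖ ^ 2)]
      rw [href]
      calc k₁ * Real.exp (-b₂) = Real.exp (-b₂) * k₁ := mul_comm _ _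
        _ ≤ Real.exp (-(‖x‖ ^ 2 * g lam σ)) * (K x lam σ).re :=
            mul_le_mul hexp hKre hk₁.le (Real.exp_nonneg _)
    have hvol : (volume (Metric.ball (0 : EuclideanSpace ℝ (Fin m)) ‖x‖⁻¹)).toReal
        = ‖x‖⁻¹ ^ m * ω := by
      rw [Measure.addHaar_ball_of_pos volume 0 (inv_pos.2 ht), ENNReal.toReal_mul,
        ENNReal.toReal_ofReal (by positivity), finrank_euclideanSpace_fin]
    have hnonneg₁ : ∀ lam ∈ S₁, 0 ≤ (f lam).re := by
      intro lam hlam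
      rw [href]
      have hKre : k₁ ≤ (K x lam σ).re := hK₁ x lam hlam σ hσ
      have := Real.exp_nonneg (-(‖x‖ ^ 2 * g lam σ))
      nlinarith
    have h1 : 2 * (C₁' / ‖x‖ ^ m) ≤ ∫ lam in S₁, (f lam).re := by
      have hsub : Metric.ball (0 : EuclideanSpace ℝ (Fin m)) ‖x‖⁻¹ ⊆ S₁ :=
        Metric.ball_subset_ball hinv
      have step1 : k₁ * Real.exp (-b₂)
            * (volume (Metric.ball (0 : EuclideanSpace ℝ (Fin m)) ‖x‖⁻¹)).toReal
          ≤ ∫ lam in Metric.ball (0 : EuclideanSpace ℝ (Fin m)) ‖x‖⁻¹, (f lam).re :=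
        by
          have := setIntegral_ge_of_const_le_real measurableSet_ball measure_ball_lt_top.ne hmainpt
            (hfire.mono_set hsub)
          rw [measureReal_def] at this
          exact this
      have step2 : (∫ lam in Metric.ball (0 : EuclideanSpace ℝ (Fin m)) ‖x‖⁻¹, (f lam).re)
          ≤ ∫ lam in S₁, (f lam).re := by
        apply setIntegral_mono_set hfire
        · exact (ae_restrict_iff' hmS₁).2 (Eventually.of_forall hnonneg₁)
        · exact HasSubset.Subset.eventuallyLE hsub
      have heq : k₁ * Real.exp (-b₂)
            * (volume (Metric.ball (0 : EuclideanSpace ℝ (Fin m)) ‖x‖⁻¹)).toReal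
          = 2 * (C₁' / ‖x‖ ^ m) := by
        rw [hvol, hC₁def, inv_pow]
        field_simp
      linarith
    -- upper bound for the tail
    have htm : (0:ℝ) < ‖x‖ ^ m := pow_pos ht m
    have hb' : 0 < b₁ / 2 * ‖x‖ ^ 2 := by positivity
    set Bf : EuclideanSpace ℝ (Fin m) → ℝ := fun lam =>
      (k₂' * Real.exp (-(b₁ / 2 * (‖x‖ * ε ‖x‖) ^ 2)))
        * Real.exp (-(b₁ / 2 * ‖x‖ ^ 2 * ‖lam‖ ^ 2)) with hBfdef
    have hBfint : Integrable Bf := (sd_gauss_integrable m hb').const_mul _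
    have hBfpt : ∀ lam ∈ S₂, ‖f lam‖ ≤ Bf lam := by
      intro lam hlam
      obtain ⟨hlamr, hlamout⟩ := hlam
      have hlnorm : ε ‖x‖ ≤ ‖lam‖ := by
        by_contra hcon
        exact hlamout (by rw [hS₁def, mem_ball_zero_iff]; linarith)
      calc ‖f lam‖ ≤ k₂' * Real.exp (-(b₁ * ‖x‖ ^ 2 * ‖lam‖ ^ 2)) := hbound x σ hσ lam hlamr
        _ ≤ Bf lam := by
            show _ ≤ (k₂' * Real.exp (-(b₁ / 2 * (‖x‖ * ε ‖x‖) ^ 2)))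
              * Real.exp (-(b₁ / 2 * ‖x‖ ^ 2 * ‖lam‖ ^ 2))
            have hsplitexp : Real.exp (-(b₁ * ‖x‖ ^ 2 * ‖lam‖ ^ 2))
                = Real.exp (-(b₁ / 2 * (‖x‖ * ‖lam‖) ^ 2))
                  * Real.exp (-(b₁ / 2 * ‖x‖ ^ 2 * ‖lam‖ ^ 2)) := by
              rw [← Real.exp_add]; ring_nf
            rw [hsplitexp, ← mul_assoc]
            refine mul_le_mul_of_nonneg_right (mul_le_mul_of_nonneg_left
              (Real.exp_le_exp.2 ?_) hk₂'nonneg) (Real.exp_nonneg _)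
            have h2 : (‖x‖ * ε ‖x‖) ^ 2 ≤ (‖x‖ * ‖lam‖) ^ 2 :=
              pow_le_pow_left₀ (by positivity)
                (mul_le_mul_of_nonneg_left hlnorm ht.le) 2
            have h3 := mul_le_mul_of_nonneg_left h2
              (le_of_lt (by positivity : (0:ℝ) < b₁ / 2))
            linarith
    have h2 : -(C₁' / ‖x‖ ^ m) ≤ (∫ lam in S₂, f lam).re := by
      have hnorm2 : ‖∫ lam in S₂, f lam‖ ≤ C₁' / ‖x‖ ^ m := by
        calc ‖∫ lam in S₂, f lam‖ ≤ ∫ lam in S₂, ‖f lam‖ := norm_integral_le_integral_norm _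
          _ ≤ ∫ lam in S₂, Bf lam := by
              apply setIntegral_mono_on hfi₂.norm hBfint.integrableOn
                (measurableSet_ball.diff measurableSet_ball) hBfpt
          _ ≤ ∫ lam, Bf lam :=
              setIntegral_le_integral hBfint (Eventually.of_forall fun lam => by
                show (0:ℝ) ≤ (k₂' * Real.exp (-(b₁ / 2 * (‖x‖ * ε ‖x‖) ^ 2)))
                  * Real.exp (-(b₁ / 2 * ‖x‖ ^ 2 * ‖lam‖ ^ 2))
                positivity)
          _ = (k₂' * Real.exp (-(b₁ / 2 * (‖x‖ * ε ‖x‖) ^ 2)))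
              * ((π / (b₁ / 2)) ^ ((m : ℝ) / 2) / ‖x‖ ^ m) := by
              simp only [hBfdef]
              rw [integral_const_mul,
                sd_gauss_integral_scaled m (by positivity : (0:ℝ) < b₁ / 2) ht]
          _ = Cg * Real.exp (-(b₁ / 2 * (‖x‖ * ε ‖x‖) ^ 2)) / ‖x‖ ^ m := by
              rw [hCgdef]; ring
          _ ≤ C₁' / ‖x‖ ^ m := (div_le_div_iff_of_pos_right htm).2 hsmall
      have habs : |(∫ lam in S₂, f lam).re| ≤ ‖∫ lam in S₂, f lam‖ := by
        exact Complex.abs_re_le_norm _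
      have := neg_abs_le (∫ lam in S₂, f lam).re
      linarith
    -- conclusion
    have hFeq : F x σ = ∫ lam in Metric.ball (0 : EuclideanSpace ℝ (Fin m)) r, f lam := hF x σ
    have hre₁ : (∫ lam in S₁, f lam).re = ∫ lam in S₁, (f lam).re := by
      simpa using (integral_re hfi₁).symm
    have hfinal : (F x σ).re = (∫ lam in S₁, (f lam).re) + (∫ lam in S₂, f lam).re := by
      rw [hFeq, hsplit, Complex.add_re, hre₁]
    rw [hfinal]
    linarith
end
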